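/- A finite simple graph G admits a transitive orientation (an orientation D such that whenever (x,y) and (y,z) are edges of D, the pair (x,z) is also an edge of D) if and only if G ⇒ I_3 fails, where I_3 is the directed path on 3 vertices. -/

import Mathlib

/-- An orientation of a simple graph `G`: an asymmetric relation `D` whose
symmetrization is exactly the adjacency relation of `G`. -/
def IsOrientation {V : Type*} (G : SimpleGraph V) (D : V → V → Prop) : Prop :=
  (∀ u v, ¬ (D u v ∧ D v u)) ∧ ∀ u v, G.Adj u v ↔ (D u v ∨ D v u)

/-- A digraph structure on a relation: no loops and no pairs of opposite arcs. -/
def IsDigraph {W : Type*} (E : W → W → Prop) : Prop :=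
  ∀ u v, ¬ (E u v ∧ E v u)

/-- `G ⇒ E`: every orientation `D` of `G` contains an isometric copy of the digraph `E`:
an injective map `f` inducing an isomorphism onto its image, preserving orientations,
such that distances (in the underlying undirected graphs) are preserved. -/
def IsoRamseyArrow {V W : Type*} (G : SimpleGraph V) (E : W → W → Prop) : Prop :=
  ∀ D : V → V → Prop, IsOrientation G D →
    ∃ f : W → V, Function.Injective f ∧
      (∀ u v, E u v ↔ D (f u) (f v)) ∧
      (∀ u v, (SimpleGraph.fromRel E).edist u v = G.edist (f u) (f v))

/-- The directed path `I n` on vertex set `Fin n`, with arcs `(i, i+1)`. -/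
def dirPath (n : ℕ) : Fin n → Fin n → Prop :=
  fun i j => (i : ℕ) + 1 = (j : ℕ)



namespace GH

variable {V : Type}

def AdjD (D : V → V → Prop) (x y : V) : Prop := D x y ∨ D y x

def Rn (D : V → V → Prop) (s : Finset V) : ℕ → V → V → Prop
  | 0, x, y => x = y ∧ x ∈ s
  | (n+1), x, z => ∃ y, x ∈ s ∧ D x y ∧ Rn D s n y z

def Reach (D : V → V → Prop) (s : Finset V) (x y : V) : Prop := ∃ n, Rn D s n x y

variable {D : V → V → Prop} {s : Finset V} {x y z : V}

lemma Rn.mem : ∀ {n x y}, Rn D s n x y → x ∈ s ∧ y ∈ s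
  | 0, _, _, h => ⟨h.1 ▸ h.2, h.1 ▸ h.2⟩
  | (n+1), _, _, ⟨_, hx, _, h⟩ => ⟨hx, (Rn.mem h).2⟩

lemma Reach.mem (h : Reach D s x y) : x ∈ s ∧ y ∈ s := h.choose_spec.mem

lemma Reach.refl (hx : x ∈ s) : Reach D s x x := ⟨0, rfl, hx⟩

lemma Reach.single (hx : x ∈ s) (hy : y ∈ s) (h : D x y) : Reach D s x y :=
  ⟨1, y, hx, h, rfl, hy⟩

lemma Rn.comp : ∀ {m n x y z}, Rn D s m x y → Rn D s n y z → Rn D s (m+n) x z := by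
  intro m
  induction m with
  | zero =>
    intro n x y z h h'
    obtain ⟨h1, _⟩ := h
    subst h1
    simpa using h'
  | succ m ih =>
    intro n x y z h h'
    obtain ⟨w, hx, hxw, hw⟩ := h
    rw [Nat.succ_add]
    exact ⟨w, hx, hxw, ih hw h'⟩

lemma Reach.trans (h : Reach D s x y) (h' : Reach D s y z) : Reach D s x z := by
  obtain ⟨m, hm⟩ := h; obtain ⟨n, hn⟩ := h'; exact ⟨m + n, hm.comp hn⟩

lemma Reach.cons (hx : x ∈ s) (hxy : D x y) (h : Reach D s y z) : Reach D s x z := by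
  obtain ⟨n, hn⟩ := h; exact ⟨n+1, y, hx, hxy, hn⟩

section asym

variable (hA : ∀ u v, ¬ (D u v ∧ D v u)) (hQ : ∀ x y z, D x y → D y z → D x z ∨ D z x)

include hA

lemma irrefl' (x : V) : ¬ D x x := fun h => hA x x ⟨h, h⟩

include hQ

lemma L1 (hnadj : ¬ AdjD D x y) (hzx : D z x) (hzy : AdjD D z y) : D z y := by
  rcases hzy with h | h
  · exact h
  · rcases hQ y z x h hzx with h' | h'
    · exact absurd (Or.inr h') hnadj
    · exact absurd (Or.inl h') hnadj

lemma L2 (hnadj : ¬ AdjD D x y) (hxz : D x z) (hyz : AdjD D y z) : D y z := by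
  rcases hyz with h | h
  · exact h
  · rcases hQ x z y hxz h with h' | h'
    · exact absurd (Or.inl h') hnadj
    · exact absurd (Or.inr h') hnadj

/-- main structural lemma: a nonadjacent reachable pair admits the W-configuration. -/
lemma lemB : ∀ n, ∀ x y : V, Rn D s n x y → ¬ AdjD D x y → x ≠ y →
    ∃ p q, p ∈ s ∧ q ∈ s ∧ D x p ∧ D p q ∧ D q y ∧ D q x ∧ D y p := by
  intro n
  induction n using Nat.strong_induction_on with
  | _ n ih =>
  match n with
  | 0 => intro x y h hn hne; exact absurd h.1 hne
  | 1 =>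
    rintro x y ⟨w, hx, hxw, rfl, hw⟩ hn hne
    exact absurd (Or.inl hxw) hn
  | 2 =>
    rintro x y ⟨a, hx, hxa, b, ha, hab, rfl, hb⟩ hn hne
    exact absurd (hQ _ _ _ hxa hab) hn
  | 3 =>
    rintro x y ⟨p, hx, hxp, q, hp, hpq, w, hq, hqw, rfl, hw⟩ hn hne
    have hqx : D q x := by
      rcases hQ _ _ _ hxp hpq with h | h
      · exact absurd (hQ _ _ _ h hqw) hn
      · exact h
    have hyp : D w p := by
      rcases hQ _ _ _ hpq hqw with h | h
      · exact absurd (hQ _ _ _ hxp h) hn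
      · exact h
    exact ⟨p, q, hp, hq, hxp, hpq, hqw, hqx, hyp⟩
  | (m+4) =>
    rintro x y ⟨x1, hx, hxx1, x2, hx1, hx1x2, h2⟩ hn hne
    have hx2s : x2 ∈ s := h2.mem.1
    rcases hQ _ _ _ hxx1 hx1x2 with hxx2 | hx2x
    · exact ih (m+3) (by omega) x y ⟨x2, hx, hxx2, h2⟩ hn hne
    · have hx2ney : x2 ≠ y := fun h => hn (Or.inr (h ▸ hx2x))
      by_cases hadj : AdjD D x2 y
      · rcases hadj with hx2y | hyx2
        · have hyx1 : D y x1 := by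
            rcases hQ _ _ _ hx1x2 hx2y with h | h
            · exact absurd (hQ _ _ _ hxx1 h) hn
            · exact h
          exact ⟨x1, x2, hx1, hx2s, hxx1, hx1x2, hx2y, hx2x, hyx1⟩
        · rcases hQ _ _ _ hyx2 hx2x with h | h
          · exact absurd (Or.inr h) hn
          · exact absurd (Or.inl h) hn
      · obtain ⟨p, q, hp, hq, g1, g2, g3, g4, g5⟩ :=
          ih (m+2) (by omega) x2 y h2 hadj hx2ney
        have hqx : D q x := by
          rcases hQ _ _ _ g4 hx2x with h | h
          · exact h
          · exact absurd (hQ _ _ _ h g3) hn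
        have hxp : D x p := by
          rcases hQ _ _ _ g2 hqx with h | h
          · rcases hQ _ _ _ g5 h with h' | h'
            · exact absurd (Or.inr h') hn
            · exact absurd (Or.inl h') hn
          · exact h
        exact ⟨p, q, hp, hq, hxp, g2, g3, hqx, g5⟩

/-- nonadjacent reachable pairs are mutually reachable, via a 3-path -/
lemma lemA (h : Reach D s x y) (hn : ¬ AdjD D x y) (hne : x ≠ y) : Reach D s y x := by
  obtain ⟨n, hnn⟩ := h
  obtain ⟨p, q, hp, hq, _, hpq, hqy, hqx, hyp'⟩ := lemB hA hQ n x y hnn hn hne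
  have hys : y ∈ s := hnn.mem.2
  have hxs : x ∈ s := hnn.mem.1
  exact ⟨3, p, hys, hyp', q, hp, hpq, x, hq, hqx, rfl, hxs⟩

end asym

end GH

namespace GH

variable {V : Type} {D : V → V → Prop} {s : Finset V} {x y z : V}

lemma firstArc : ∀ {n x y}, Rn D s n x y → x ≠ y → ∃ z ∈ s, D x z := by
  intro n x y h hne
  match n, h with
  | 0, h => exact absurd h.1 hne
  | (n+1), ⟨b, hx, hxb, hb⟩ => exact ⟨b, hb.mem.1, hxb⟩

lemma lastArc : ∀ {n x y}, Rn D s n x y → x ≠ y → ∃ z ∈ s, D z y := by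
  intro n
  induction n with
  | zero => intro x y h hne; exact absurd h.1 hne
  | succ n ih =>
    rintro x y ⟨b, hx, hxb, hb⟩ hne
    by_cases hby : b = y
    · exact ⟨x, hx, hby ▸ hxb⟩
    · exact ih hb hby

section asym
variable (hA : ∀ u v, ¬ (D u v ∧ D v u)) (hQ : ∀ x y z, D x y → D y z → D x z ∨ D z x)

include hA in
lemma no_strong_two (hcard : s.card = 2)
    (hstrong : ∀ x ∈ s, ∀ y ∈ s, Reach D s x y) : False := by
  classical
  obtain ⟨x, y, hxy, hs⟩ := Finset.card_eq_two.mp hcard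
  have hx : x ∈ s := by rw [hs]; simp
  have hy : y ∈ s := by rw [hs]; simp
  have hmem : ∀ z ∈ s, z = x ∨ z = y := by intro z hz; rw [hs] at hz; simpa using hz
  obtain ⟨n, hn⟩ := hstrong x hx y hy
  obtain ⟨z, hz, hxz⟩ := firstArc hn hxy
  have hzy : z = y := by
    rcases hmem z hz with h | h
    · exact absurd (h ▸ hxz) (irrefl' hA x)
    · exact h
  have hxy' : D x y := hzy ▸ hxz
  obtain ⟨m, hm⟩ := hstrong y hy x hx
  obtain ⟨w, hw, hyw⟩ := firstArc hm (Ne.symm hxy)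
  have hwx : w = x := by
    rcases hmem w hw with h | h
    · exact h
    · exact absurd (h ▸ hyw) (irrefl' hA y)
  exact hA x y ⟨hxy', hwx ▸ hyw⟩

end asym

/-- complement-step relation within a finset -/
def NR (D : V → V → Prop) (s : Finset V) (x y : V) : Prop :=
  x ∈ s ∧ y ∈ s ∧ x ≠ y ∧ ¬ AdjD D x y

def CoReach (D : V → V → Prop) (s : Finset V) : V → V → Prop :=
  Relation.ReflTransGen (NR D s)

lemma NR.symm' (h : NR D s x y) : NR D s y x :=
  ⟨h.2.1, h.1, h.2.2.1.symm, fun h' => h.2.2.2 h'.symm⟩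

lemma CoReach.symm' (h : CoReach D s x y) : CoReach D s y x :=
  (@Relation.ReflTransGen.stdSymm _ _ ⟨fun _ _ h => NR.symm' h⟩).symm _ _ h

lemma CoReach.trans' (h : CoReach D s x y) (h' : CoReach D s y z) : CoReach D s x z :=
  Relation.ReflTransGen.trans h h'

end GH

namespace GH

variable {V : Type} {D : V → V → Prop} {s : Finset V} {x y z : V}

lemma AdjD.symm' (h : AdjD D x y) : AdjD D y x := Or.symm h

section crux
variable (hA : ∀ u v, ¬ (D u v ∧ D v u)) (hQ : ∀ x y z, D x y → D y z → D x z ∨ D z x)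
include hA hQ

lemma crux [DecidableEq V] : ∀ s : Finset V, 2 ≤ s.card →
    (∀ x ∈ s, ∀ y ∈ s, Reach D s x y) →
    ∃ A : Finset V, A ⊆ s ∧ A.Nonempty ∧ (s \ A).Nonempty ∧
      ∀ a ∈ A, ∀ b ∈ s \ A, AdjD D a b := by
  classical
  intro s
  induction' s using Finset.strongInductionOn with s ih
  intro hcard hstrong
  obtain ⟨v, hv⟩ : s.Nonempty := Finset.card_pos.mp (by omega)
  set t := s.erase v with ht
  have htsub : t ⊂ s := Finset.erase_ssubset hv
  have htsub' : t ⊆ s := htsub.subset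
  have htcard : t.card = s.card - 1 := Finset.card_erase_of_mem hv
  have hmemt : ∀ {a}, a ∈ t ↔ (a ≠ v ∧ a ∈ s) := fun {a} => Finset.mem_erase
  by_cases hts : ∀ x ∈ t, ∀ y ∈ t, Reach D t x y
  · -- t is strong
    have ht2 : 2 ≤ t.card := by
      by_contra h
      have hs2 : s.card = 2 := by omega
      exact no_strong_two hA hs2 hstrong
    obtain ⟨A', hA'sub, hA'ne, hA'comp, hA'adj⟩ := ih t htsub ht2 hts
    -- sidedness is preserved by complement-reachability
    have coStay : ∀ a b, CoReach D t a b → (a ∈ A' ↔ b ∈ A') := by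
      intro a b h
      induction h with
      | refl => exact Iff.rfl
      | tail hab hstep ihh =>
        rename_i b' c'
        refine ihh.trans ?_
        obtain ⟨hb't, hc't, hne, hnadj⟩ := hstep
        constructor
        · intro hbA
          by_contra hcA
          exact hnadj (hA'adj b' hbA c' (Finset.mem_sdiff.mpr ⟨hc't, hcA⟩))
        · intro hcA
          by_contra hbA
          exact hnadj ((hA'adj c' hcA b' (Finset.mem_sdiff.mpr ⟨hb't, hbA⟩)).symm')
    by_cases hP : ∀ b ∈ t, ∃ w, w ∈ t ∧ ¬ AdjD D v w ∧ CoReach D t b w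
    · -- every complement class of t meets the non-neighbours of v : contradiction
      exfalso
      -- an in-neighbour u of v
      obtain ⟨y1, hy1⟩ : t.Nonempty := Finset.card_pos.mp (by omega)
      have hy1s := htsub' hy1
      have hy1v : y1 ≠ v := (hmemt.mp hy1).1
      obtain ⟨n0, hn0⟩ := hstrong y1 hy1s v hv
      obtain ⟨u, hus, huv⟩ := lastArc hn0 hy1v
      have huvne : u ≠ v := fun h => irrefl' hA v (h ▸ huv)
      have hut : u ∈ t := hmemt.mpr ⟨huvne, hus⟩
      -- a vertex on the opposite side of the cut from u
      obtain ⟨xs, hxst, hxsnc⟩ : ∃ x', x' ∈ t ∧ ¬ CoReach D t u x' := by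
        by_cases hu : u ∈ A'
        · obtain ⟨b, hb⟩ := hA'comp
          refine ⟨b, (Finset.mem_sdiff.mp hb).1, fun h => ?_⟩
          exact (Finset.mem_sdiff.mp hb).2 ((coStay u b h).mp hu)
        · obtain ⟨b, hb⟩ := hA'ne
          exact ⟨b, hA'sub hb, fun h => hu ((coStay u b h).mpr hb)⟩
      -- u dominates everything outside its complement class
      have claim1 : ∀ y ∈ t, ¬ CoReach D t u y → D u y := by
        intro y hyt hnc
        obtain ⟨w, hwt, hvw, hyw⟩ := hP y hyt
        have hnuw : ¬ CoReach D t u w := fun h => hnc (Relation.ReflTransGen.trans h (CoReach.symm' hyw))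
        have hune : ∀ c, CoReach D t w c → ¬ CoReach D t u c := by
          intro c hwc h; exact hnuw (Relation.ReflTransGen.trans h (CoReach.symm' hwc))
        have hadjall : ∀ c, c ∈ t → CoReach D t w c → AdjD D u c := by
          intro c hct hwc
          by_contra hnadj
          have hne : u ≠ c := by
            intro he
            cases he
            exact hune u hwc Relation.ReflTransGen.refl
          exact hune c hwc (Relation.ReflTransGen.single ⟨hut, hct, hne, hnadj⟩)
        have huw : D u w :=
          L1 hA hQ hvw huv (hadjall w hwt Relation.ReflTransGen.refl)
        have main : ∀ b, CoReach D t w b → D u b := by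
          intro b hb
          induction hb with
          | refl => exact huw
          | tail hwb hstep ihh =>
            rename_i b' c'
            exact L1 hA hQ hstep.2.2.2 ihh
              (hadjall c' hstep.2.1 (Relation.ReflTransGen.tail hwb hstep))
        exact main y (CoReach.symm' hyw)
      -- everything inside u's class dominates everything outside
      have claim2 : ∀ z y, y ∈ t → CoReach D t u z → ¬ CoReach D t u y → D z y := by
        intro z y hyt huz hnuy
        induction huz with
        | refl => exact claim1 y hyt hnuy
        | tail hub hstep ihh =>
          rename_i b' c'
          have hcny : ¬ CoReach D t c' y := fun h => hnuy (Relation.ReflTransGen.trans (Relation.ReflTransGen.tail hub hstep) h)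
          have hne : c' ≠ y := by rintro rfl; exact hnuy (Relation.ReflTransGen.tail hub hstep)
          have hadj : AdjD D c' y := by
            by_contra hna
            exact hcny (Relation.ReflTransGen.single ⟨hstep.2.1, hyt, hne, hna⟩)
          exact L2 hA hQ hstep.2.2.2 ihh hadj
      -- but xs reaches u inside t : contradiction
      have final : ∀ n a, Rn D t n a u → ¬ CoReach D t u a → False := by
        intro n
        induction n with
        | zero =>
          intro a h hnc
          exact hnc (h.1 ▸ Relation.ReflTransGen.refl)
        | succ n ihn =>
          rintro a ⟨b, hat, hab, hb⟩ hnc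
          by_cases hcb : CoReach D t u b
          · exact hA a b ⟨hab, claim2 b a hat hcb hnc⟩
          · exact ihn b hb hcb
      obtain ⟨n, hn⟩ := hts xs hxst u hut
      exact final n xs hn hxsnc
    · -- some complement class of t misses the non-neighbours of v : build the cut
      push_neg at hP
      obtain ⟨b0, hb0t, hb0⟩ := hP
      set P : V → Prop := fun x => ∃ w, w ∈ t ∧ ¬ AdjD D v w ∧ CoReach D t x w with hPdef
      refine ⟨insert v (t.filter fun x => P x), ?_, ⟨v, Finset.mem_insert_self v _⟩, ?_, ?_⟩
      · intro a ha
        rcases Finset.mem_insert.mp ha with rfl | ha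
        · exact hv
        · exact htsub' (Finset.mem_filter.mp ha).1
      · refine ⟨b0, Finset.mem_sdiff.mpr ⟨htsub' hb0t, fun h => ?_⟩⟩
        rcases Finset.mem_insert.mp h with rfl | h
        · exact (hmemt.mp hb0t).1 rfl
        · obtain ⟨w, hw⟩ := (Finset.mem_filter.mp h).2
          exact hb0 w hw.1 hw.2.1 hw.2.2
      · intro a ha b hb
        obtain ⟨hbs, hbni⟩ := Finset.mem_sdiff.mp hb
        have hbnv : b ≠ v := by
          intro h
          exact hbni (by rw [h]; exact Finset.mem_insert_self v _)
        have hbt : b ∈ t := hmemt.mpr ⟨hbnv, hbs⟩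
        have hbnP : ¬ P b := fun h =>
          hbni (Finset.mem_insert.mpr (Or.inr (Finset.mem_filter.mpr ⟨hbt, h⟩)))
        rcases Finset.mem_insert.mp ha with rfl | ha
        · by_contra hnadj
          exact hbnP ⟨b, hbt, hnadj, Relation.ReflTransGen.refl⟩
        · obtain ⟨hat, hPa⟩ := Finset.mem_filter.mp ha
          by_contra hnadj
          have hne : a ≠ b := fun h => hbnP (h ▸ hPa)
          obtain ⟨w, hwt, hvw, haw⟩ := hPa
          exact hbnP ⟨w, hwt, hvw,
            Relation.ReflTransGen.trans (CoReach.symm' (Relation.ReflTransGen.single (⟨hat, hbt, hne, hnadj⟩ : NR D t a b))) haw⟩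
  · -- t is not strong : v is adjacent to everything, cut {v}
    push_neg at hts
    obtain ⟨x0, hx0t, y0, hy0t, hny0⟩ := hts
    have hvall : ∀ w ∈ t, AdjD D v w := by
      intro w hwt
      by_contra hnadj
      have hws : w ∈ s := htsub' hwt
      have hwv : w ≠ v := (hmemt.mp hwt).1
      -- the W-configuration on (v, w)
      obtain ⟨n1, hn1⟩ := hstrong v hv w hws
      obtain ⟨p, q, hps, hqs, b1, b2, b3, b4, b5⟩ :=
        lemB hA hQ n1 v w hn1 hnadj (Ne.symm hwv)
      have hpt : p ∈ t := hmemt.mpr ⟨fun h => irrefl' hA v (h ▸ b1), hps⟩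
      have hqt : q ∈ t := hmemt.mpr ⟨fun h => irrefl' hA v (h ▸ b4), hqs⟩
      -- α and its dual
      have halpha : ∀ z ∈ t, D v z → Reach D t z w → Reach D t w z := by
        intro z hzt hvz hzw
        by_contra hnwz
        have hzne : z ≠ w := fun h => hnadj (Or.inl (h ▸ hvz))
        have hadj : AdjD D z w := by
          by_contra h'
          exact hnwz (lemA hA hQ hzw h' hzne)
        rcases hadj with h | h
        · rcases hQ _ _ _ hvz h with h' | h'
          · exact hnadj (Or.inl h')
          · exact hnadj (Or.inr h')
        · exact hnwz (Reach.single hwt hzt h)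
      have halpha' : ∀ z ∈ t, D z v → Reach D t w z → Reach D t z w := by
        intro z hzt hzv hwz
        by_contra hnzw
        have hzne : w ≠ z := fun h => hnadj (Or.inr (h ▸ hzv))
        have hadj : AdjD D w z := by
          by_contra h'
          exact hnzw (lemA hA hQ hwz h' hzne)
        rcases hadj with h | h
        · rcases hQ _ _ _ h hzv with h' | h'
          · exact hnadj (Or.inr h')
          · exact hnadj (Or.inl h')
        · exact hnzw (Reach.single hzt hwt h)
      -- path decompositions around v
      have d1 : ∀ x ∈ t, ∃ z ∈ t, D v z ∧ Reach D t z x := by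
        intro x hxt
        have hxv : x ≠ v := (hmemt.mp hxt).1
        obtain ⟨n, hn⟩ := hstrong v hv x (htsub' hxt)
        clear hn1
        have gen : ∀ n a x, Rn D s n a x → x ≠ v →
            ((a = v → ∃ z ∈ t, D v z ∧ Reach D t z x) ∧
             (a ≠ v → (Reach D t a x ∨ ∃ z ∈ t, D v z ∧ Reach D t z x))) := by
          intro n
          induction n with
          | zero =>
            intro a x h hxv
            obtain ⟨rfl, has⟩ := h
            exact ⟨fun h' => absurd h' hxv, fun h' =>
              Or.inl (Reach.refl (hmemt.mpr ⟨hxv, has⟩))⟩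
          | succ n ihn =>
            rintro a x ⟨b, has, hab, hb⟩ hxv
            by_cases hbv : b = v
            · subst hbv
              obtain ⟨z, hz, hvz, hzx⟩ := (ihn b x hb hxv).1 rfl
              exact ⟨fun _ => ⟨z, hz, hvz, hzx⟩, fun _ => Or.inr ⟨z, hz, hvz, hzx⟩⟩
            · have hbt : b ∈ t := hmemt.mpr ⟨hbv, hb.mem.1⟩
              rcases (ihn b x hb hxv).2 hbv with hbx | hE
              · refine ⟨fun hav => ⟨b, hbt, hav ▸ hab, hbx⟩, fun hanv => ?_⟩
                exact Or.inl (Reach.cons (hmemt.mpr ⟨hanv, has⟩) hab hbx)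
              · exact ⟨fun _ => hE, fun _ => Or.inr hE⟩
        exact (gen n v x hn hxv).1 rfl
      have d2 : ∀ x ∈ t, ∃ z ∈ t, Reach D t x z ∧ D z v := by
        intro x hxt
        have hxv : x ≠ v := (hmemt.mp hxt).1
        obtain ⟨n, hn⟩ := hstrong x (htsub' hxt) v hv
        clear hn1
        have gen : ∀ n a, Rn D s n a v → a ≠ v → ∃ z ∈ t, Reach D t a z ∧ D z v := by
          intro n
          induction n with
          | zero => intro a h hav; exact absurd h.1 hav
          | succ n ihn =>
            rintro a ⟨b, has, hab, hb⟩ hav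
            have hat : a ∈ t := hmemt.mpr ⟨hav, has⟩
            by_cases hbv : b = v
            · exact ⟨a, hat, Reach.refl hat, hbv ▸ hab⟩
            · obtain ⟨z, hz, hrz, hzv⟩ := ihn b hb hbv
              exact ⟨z, hz, Reach.cons hat hab hrz, hzv⟩
        exact gen n x hn hxv
      -- the class of w is minimal and maximal
      have hmin : ∀ x ∈ t, Reach D t x w → Reach D t w x := by
        intro x hxt hxw
        by_contra hnwx
        obtain ⟨z, hz, hvz, hzx⟩ := d1 x hxt
        have h1 : Reach D t z w := hzx.trans hxw
        exact hnwx ((halpha z hz hvz h1).trans hzx)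
      have hmax : ∀ x ∈ t, Reach D t w x → Reach D t x w := by
        intro x hxt hwx
        by_contra hnxw
        obtain ⟨z, hz, hrz, hzv⟩ := d2 x hxt
        have h1 : Reach D t w z := hwx.trans hrz
        exact hnxw (hrz.trans (halpha' z hz hzv h1))
      -- no vertex is incomparable with w
      have hkappa : ∀ x ∈ t, ¬ Reach D t x w → ¬ Reach D t w x → False := by
        intro x hxt h1 h2
        have hne : x ≠ w := fun h => h1 (h ▸ Reach.refl hxt)
        have hnadj2 : ¬ AdjD D x w := by
          rintro (h | h)
          · exact h1 (Reach.single hxt hwt h)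
          · exact h2 (Reach.single hwt hxt h)
        obtain ⟨n, hn⟩ := hstrong x (htsub' hxt) w hws
        obtain ⟨p', q', hp's, hq's, c1, c2, c3, c4, c5⟩ :=
          lemB hA hQ n x w hn hnadj2 hne
        by_cases hp'v : p' = v
        · exact hnadj (Or.inr (hp'v ▸ c5))
        · by_cases hq'v : q' = v
          · exact hnadj (Or.inl (hq'v ▸ c3))
          · have hp't : p' ∈ t := hmemt.mpr ⟨hp'v, hp's⟩
            have hq't : q' ∈ t := hmemt.mpr ⟨hq'v, hq's⟩
            exact h1 ⟨3, p', hxt, c1, q', hp't, c2, w, hq't, c3, rfl, hwt⟩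
      -- now contradict the failure of strong connectivity of t
      by_cases h1 : Reach D t x0 w
      · by_cases h2 : Reach D t w y0
        · exact hny0 (h1.trans h2)
        · by_cases h3 : Reach D t y0 w
          · exact h2 (hmin y0 hy0t h3)
          · exact hkappa y0 hy0t h3 h2
      · by_cases h4 : Reach D t w x0
        · exact h1 (hmax x0 hx0t h4)
        · exact hkappa x0 hx0t h1 h4
    refine ⟨{v}, Finset.singleton_subset_iff.mpr hv, ⟨v, Finset.mem_singleton_self v⟩, ?_, ?_⟩
    · rw [← Finset.erase_eq]
      have h1 : 0 < t.card := by omega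
      exact Finset.card_pos.mp h1
    · intro a ha b hb
      rw [Finset.mem_singleton] at ha
      subst ha
      rw [← Finset.erase_eq] at hb
      exact hvall b hb

end crux
end GH

namespace GH

variable {V : Type} {D : V → V → Prop} {x y z : V}

/-- transitive orientation package on a finset -/
def TOn (D : V → V → Prop) (c : Finset V) (T : V → V → Prop) : Prop :=
  (∀ x ∈ c, ∀ y ∈ c, (AdjD D x y ↔ (T x y ∨ T y x))) ∧
  (∀ x y, T x y → ¬ T y x) ∧
  (∀ x y z, T x y → T y z → T x z) ∧
  (∀ x y, T x y → x ∈ c ∧ y ∈ c ∧ AdjD D x y)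

section main
variable (hA : ∀ u v, ¬ (D u v ∧ D v u)) (hQ : ∀ x y z, D x y → D y z → D x z ∨ D z x)
include hA hQ

lemma mainLemma [DecidableEq V] : ∀ s : Finset V, ∃ T, TOn D s T := by
  intro s
  induction' s using Finset.strongInductionOn with s ih
  classical
  by_cases hstrong : ∀ x ∈ s, ∀ y ∈ s, Reach D s x y
  · by_cases hc : 2 ≤ s.card
    · -- strong case: use the cut from crux
      obtain ⟨A, hsub, hAne, hBne, hadj⟩ := crux hA hQ s hc hstrong
      have hAss : A ⊂ s := by
        rw [Finset.ssubset_iff_of_subset hsub]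
        obtain ⟨b, hb⟩ := hBne
        exact ⟨b, (Finset.mem_sdiff.mp hb).1, (Finset.mem_sdiff.mp hb).2⟩
      have hBss : s \ A ⊂ s := by
        rw [Finset.ssubset_iff_of_subset (Finset.sdiff_subset)]
        obtain ⟨a, ha⟩ := hAne
        exact ⟨a, hsub ha, fun h => (Finset.mem_sdiff.mp h).2 ha⟩
      obtain ⟨T₁, h1iff, h1asym, h1trans, h1supp⟩ := ih A hAss
      obtain ⟨T₂, h2iff, h2asym, h2trans, h2supp⟩ := ih (s \ A) hBss
      refine ⟨fun x y => (x ∈ A ∧ y ∈ s \ A) ∨ (T₁ x y) ∨ (T₂ x y), ?_, ?_, ?_, ?_⟩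
      · intro x hx y hy
        constructor
        · intro hxy
          by_cases hxA : x ∈ A
          · by_cases hyA : y ∈ A
            · rcases (h1iff x hxA y hyA).mp hxy with h | h
              · exact Or.inl (Or.inr (Or.inl h))
              · exact Or.inr (Or.inr (Or.inl h))
            · exact Or.inl (Or.inl ⟨hxA, Finset.mem_sdiff.mpr ⟨hy, hyA⟩⟩)
          · by_cases hyA : y ∈ A
            · exact Or.inr (Or.inl ⟨hyA, Finset.mem_sdiff.mpr ⟨hx, hxA⟩⟩)
            · rcases (h2iff x (Finset.mem_sdiff.mpr ⟨hx, hxA⟩) y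
                  (Finset.mem_sdiff.mpr ⟨hy, hyA⟩)).mp hxy with h | h
              · exact Or.inl (Or.inr (Or.inr h))
              · exact Or.inr (Or.inr (Or.inr h))
        · rintro (h | h)
          · rcases h with ⟨h1, h2⟩ | h | h
            · exact hadj x h1 y h2
            · exact (h1supp x y h).2.2
            · exact (h2supp x y h).2.2
          · rcases h with ⟨h1, h2⟩ | h | h
            · exact (hadj y h1 x h2).symm'
            · exact ((h1supp y x h).2.2).symm'
            · exact ((h2supp y x h).2.2).symm'
      · rintro x y (⟨h1, h2⟩ | h | h) (⟨g1, g2⟩ | g | g)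
        · exact (Finset.mem_sdiff.mp h2).2 g1
        · exact (Finset.mem_sdiff.mp h2).2 (h1supp y x g).1
        · exact (Finset.mem_sdiff.mp (h2supp y x g).2.1).2 h1
        · exact (Finset.mem_sdiff.mp g2).2 (h1supp x y h).1
        · exact h1asym x y h g
        · exact (Finset.mem_sdiff.mp (h2supp y x g).2.1).2 (h1supp x y h).1
        · exact (Finset.mem_sdiff.mp (h2supp x y h).2.1).2 g1
        · exact (Finset.mem_sdiff.mp (h2supp x y h).2.1).2 (h1supp y x g).1
        · exact h2asym x y h g
      · rintro x y z (⟨h1, h2⟩ | h | h) (⟨g1, g2⟩ | g | g)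
        · exact absurd g1 (Finset.mem_sdiff.mp h2).2
        · exact absurd (h1supp y z g).1 (Finset.mem_sdiff.mp h2).2
        · exact Or.inl ⟨h1, (h2supp y z g).2.1⟩
        · exact Or.inl ⟨(h1supp x y h).1, g2⟩
        · exact Or.inr (Or.inl (h1trans x y z h g))
        · exact absurd (h1supp x y h).2.1 (Finset.mem_sdiff.mp (h2supp y z g).1).2
        · exact absurd g1 (Finset.mem_sdiff.mp (h2supp x y h).2.1).2
        · exact absurd (h1supp y z g).1 (Finset.mem_sdiff.mp (h2supp x y h).2.1).2
        · exact Or.inr (Or.inr (h2trans x y z h g))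
      · rintro x y (⟨h1, h2⟩ | h | h)
        · exact ⟨hsub h1, (Finset.mem_sdiff.mp h2).1, hadj x h1 y h2⟩
        · obtain ⟨hx, hy, ha⟩ := h1supp x y h
          exact ⟨hsub hx, hsub hy, ha⟩
        · obtain ⟨hx, hy, ha⟩ := h2supp x y h
          exact ⟨(Finset.mem_sdiff.mp hx).1, (Finset.mem_sdiff.mp hy).1, ha⟩
    · -- tiny case
      refine ⟨fun _ _ => False, ?_, by simp, by simp, by simp⟩
      intro x hx y hy
      have hxy : x = y := Finset.card_le_one.mp (by omega) x hx y hy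
      subst hxy
      simp only [iff_false, or_self]
      rintro (h | h) <;> exact irrefl' hA x h
  · -- not strong: order the strong components
    push_neg at hstrong
    obtain ⟨x0, hx0, y0, hy0, hnR⟩ := hstrong
    set comp : V → Finset V := fun x => s.filter (fun w => Reach D s x w ∧ Reach D s w x)
      with hcomp
    have hcompmem : ∀ {a w}, w ∈ comp a ↔ (w ∈ s ∧ Reach D s a w ∧ Reach D s w a) := by
      intro a w; simp [hcomp]
    have hcompss : ∀ x ∈ s, comp x ⊂ s := by
      intro x hx
      rw [Finset.ssubset_iff_of_subset (Finset.filter_subset _ s)]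
      by_contra hall
      push_neg at hall
      have h1 := hcompmem.mp (hall x0 hx0)
      have h2 := hcompmem.mp (hall y0 hy0)
      exact hnR (h1.2.2.trans h2.2.1)
    have key : ∀ c : Finset V, ∃ T, c ⊂ s → TOn D c T := by
      intro c
      by_cases h : c ⊂ s
      · exact (ih c h).imp fun T hT => fun _ => hT
      · exact ⟨fun _ _ => False, fun h' => absurd h' h⟩
    choose F hF using key
    have compEq : ∀ {a b}, a ∈ s → b ∈ s → Reach D s a b → Reach D s b a →
        comp a = comp b := by
      intro a b _ _ hab hba
      apply Finset.ext
      intro w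
      rw [hcompmem, hcompmem]
      exact ⟨fun ⟨h1, h2, h3⟩ => ⟨h1, hba.trans h2, h3.trans hab⟩,
             fun ⟨h1, h2, h3⟩ => ⟨h1, hab.trans h2, h3.trans hba⟩⟩
    refine ⟨fun x y => (x ∈ s ∧ y ∈ s ∧ Reach D s x y ∧ ¬ Reach D s y x) ∨
      (x ∈ s ∧ y ∈ s ∧ Reach D s x y ∧ Reach D s y x ∧ F (comp x) x y), ?_, ?_, ?_, ?_⟩
    · intro x hx y hy
      constructor
      · intro hxy
        have harc : Reach D s x y ∨ Reach D s y x := by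
          rcases hxy with h | h
          · exact Or.inl (Reach.single hx hy h)
          · exact Or.inr (Reach.single hy hx h)
        by_cases h1 : Reach D s x y
        · by_cases h2 : Reach D s y x
          · have hxc : x ∈ comp x := hcompmem.mpr ⟨hx, Reach.refl hx, Reach.refl hx⟩
            have hyc : y ∈ comp x := hcompmem.mpr ⟨hy, h1, h2⟩
            rcases ((hF (comp x) (hcompss x hx)).1 x hxc y hyc).mp hxy with h | h
            · exact Or.inl (Or.inr ⟨hx, hy, h1, h2, h⟩)
            · refine Or.inr (Or.inr ⟨hy, hx, h2, h1, ?_⟩)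
              rw [compEq hy hx h2 h1]
              exact h
          · exact Or.inl (Or.inl ⟨hx, hy, h1, h2⟩)
        · rcases harc with h | h
          · exact absurd h h1
          · by_cases h2 : Reach D s x y
            · exact absurd h2 h1
            · exact Or.inr (Or.inl ⟨hy, hx, h, h2⟩)
      · have hsupp : ∀ a b, ((a ∈ s ∧ b ∈ s ∧ Reach D s a b ∧ ¬ Reach D s b a) ∨
            (a ∈ s ∧ b ∈ s ∧ Reach D s a b ∧ Reach D s b a ∧ F (comp a) a b)) →
            AdjD D a b := by
          rintro a b (⟨ha, hb, h1, h2⟩ | ⟨ha, hb, h1, h2, h3⟩)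
          · by_contra hnadj
            have hne : a ≠ b := by
              rintro rfl; exact h2 (Reach.refl ha)
            exact h2 (lemA hA hQ h1 hnadj hne)
          · exact ((hF (comp a) (hcompss a ha)).2.2.2 a b h3).2.2
        rintro (h | h)
        · exact hsupp x y h
        · exact (hsupp y x h).symm'
    · rintro x y (⟨hx, hy, h1, h2⟩ | ⟨hx, hy, h1, h2, h3⟩)
        (⟨gx, gy, g1, g2⟩ | ⟨gx, gy, g1, g2, g3⟩)
      · exact h2 g1
      · exact h2 g1
      · exact g2 h1
      · have hce : comp y = comp x := compEq hy hx h2 h1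
        rw [hce] at g3
        exact (hF (comp x) (hcompss x hx)).2.1 x y h3 g3
    · rintro x y z (⟨hx, hy, h1, h2⟩ | ⟨hx, hy, h1, h2, h3⟩)
        (⟨gx, gz, g1, g2⟩ | ⟨gx, gz, g1, g2, g3⟩)
      · exact Or.inl ⟨hx, gz, h1.trans g1, fun h => h2 (g1.trans h)⟩
      · exact Or.inl ⟨hx, gz, h1.trans g1, fun h => h2 (g1.trans h)⟩
      · exact Or.inl ⟨hx, gz, h1.trans g1, fun h => g2 (h.trans h1)⟩
      · have hce : comp y = comp x := compEq hy hx h2 h1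
        rw [hce] at g3
        refine Or.inr ⟨hx, gz, h1.trans g1, g2.trans h2, ?_⟩
        exact (hF (comp x) (hcompss x hx)).2.2.1 x y z h3 g3
    · rintro x y (⟨hx, hy, h1, h2⟩ | ⟨hx, hy, h1, h2, h3⟩)
      · refine ⟨hx, hy, ?_⟩
        by_contra hnadj
        have hne : x ≠ y := by
          rintro rfl; exact h2 (Reach.refl hx)
        exact h2 (lemA hA hQ h1 hnadj hne)
      · exact ⟨hx, hy, ((hF (comp x) (hcompss x hx)).2.2.2 x y h3).2.2⟩

end main
end GH

instance (n : ℕ) (i j : Fin n) : Decidable (dirPath n i j) := by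
  unfold dirPath
  exact Nat.decEq _ _

open GH

theorem stmt14 (V : Type) [Fintype V] (G : SimpleGraph V) :
    (∃ D : V → V → Prop, IsOrientation G D ∧
      ∀ x y z, D x y → D y z → D x z) ↔ ¬ IsoRamseyArrow G (dirPath 3) := by
  classical
  constructor
  · rintro ⟨D, hD, htrans⟩ harrow
    obtain ⟨f, hinj, hedge, hdist⟩ := harrow D hD
    have h01 : D (f 0) (f 1) := (hedge 0 1).mp (by decide)
    have h12 : D (f 1) (f 2) := (hedge 1 2).mp (by decide)
    have h02 : D (f 0) (f 2) := htrans _ _ _ h01 h12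
    have : dirPath 3 0 2 := (hedge 0 2).mpr h02
    exact (by decide : ¬ dirPath 3 (0 : Fin 3) (2 : Fin 3)) this
  · intro hno
    rw [IsoRamseyArrow] at hno
    push_neg at hno
    obtain ⟨D, hD, hno2⟩ := hno
    have hA : ∀ u v, ¬ (D u v ∧ D v u) := hD.1
    have hadj : ∀ u v, G.Adj u v ↔ (D u v ∨ D v u) := hD.2
    -- quasi-transitivity of D
    have hQ : ∀ x y z, D x y → D y z → D x z ∨ D z x := by
      intro x y z hxy hyz
      by_contra hn
      have nxy : x ≠ y := fun h => irrefl' hA x (h ▸ hxy)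
      have nyz : y ≠ z := fun h => irrefl' hA y (h ▸ hyz)
      have nxz : x ≠ z := fun h => hA x y ⟨hxy, h ▸ hyz⟩
      have hGxy : G.Adj x y := (hadj x y).mpr (Or.inl hxy)
      have hGyz : G.Adj y z := (hadj y z).mpr (Or.inl hyz)
      have hGxz : ¬ G.Adj x z := fun h => hn ((hadj x z).mp h)
      set f : Fin 3 → V := ![x, y, z] with hf
      have hf0 : f 0 = x := rfl
      have hf1 : f 1 = y := rfl
      have hf2 : f 2 = z := rfl
      -- distance two both in the path and in G
      have edist2 : ∀ (W : Type) (H : SimpleGraph W) (a b c : W), H.Adj a b → H.Adj b c →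
          ¬ H.Adj a c → a ≠ c → H.edist a c = 2 := by
        intro W H a b c hab hbc hnac hnec
        have e1 : H.edist a c ≤ 2 := by
          calc H.edist a c ≤ H.edist a b + H.edist b c := SimpleGraph.edist_triangle
          _ = 2 := by
            rw [SimpleGraph.edist_eq_one_iff_adj.mpr hab,
              SimpleGraph.edist_eq_one_iff_adj.mpr hbc]
            rfl
        have e2 : 2 ≤ H.edist a c := by
          have h1 : (1 : ℕ∞) ≤ H.edist a c := by
            rw [ENat.one_le_iff_ne_zero]
            intro h
            exact hnec (SimpleGraph.edist_eq_zero_iff.mp h)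
          have h2 : (1 : ℕ∞) ≠ H.edist a c := fun h =>
            hnac (SimpleGraph.edist_eq_one_iff_adj.mp h.symm)
          have : (1 : ℕ∞) < H.edist a c := lt_of_le_of_ne h1 h2
          exact Order.add_one_le_of_lt this
        exact le_antisymm e1 e2
      set P3 : SimpleGraph (Fin 3) := SimpleGraph.fromRel (dirPath 3) with hP3
      have p01 : P3.Adj 0 1 := by
        rw [hP3, SimpleGraph.fromRel_adj]
        exact ⟨by decide, Or.inl (by decide)⟩
      have p12 : P3.Adj 1 2 := by
        rw [hP3, SimpleGraph.fromRel_adj]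
        exact ⟨by decide, Or.inl (by decide)⟩
      have p02 : ¬ P3.Adj 0 2 := by
        rw [hP3, SimpleGraph.fromRel_adj]
        rintro ⟨-, h | h⟩ <;> exact (by decide : ¬ dirPath 3 (0:Fin 3) (2:Fin 3) ∧
          ¬ dirPath 3 (2:Fin 3) (0:Fin 3)).elim (fun a b => by first | exact a h | exact b h)
      have eP02 : P3.edist 0 2 = 2 := edist2 (Fin 3) P3 0 1 2 p01 p12 p02 (by decide)
      have eG02 : G.edist x z = 2 := edist2 V G x y z hGxy hGyz hGxz nxz
      have hinj3 : Function.Injective f := by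
        intro a b hab
        fin_cases a <;> fin_cases b <;>
          simp only [Fin.isValue, hf0, hf1, hf2] at hab ⊢ <;>
          first
            | rfl
            | exact absurd hab nxy
            | exact absurd hab nyz
            | exact absurd hab nxz
            | exact absurd hab.symm nxy
            | exact absurd hab.symm nyz
            | exact absurd hab.symm nxz
      have hedges : ∀ u v, dirPath 3 u v ↔ D (f u) (f v) := by
        intro u v
        fin_cases u <;> fin_cases v <;>
          simp only [Fin.isValue, hf0, hf1, hf2]
        · exact iff_of_false (by decide) (irrefl' hA x)
        · exact iff_of_true (by decide) hxy
        · exact iff_of_false (by decide) (fun h => hn (Or.inl h))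
        · exact iff_of_false (by decide) (fun h => hA x y ⟨hxy, h⟩)
        · exact iff_of_false (by decide) (irrefl' hA y)
        · exact iff_of_true (by decide) hyz
        · exact iff_of_false (by decide) (fun h => hn (Or.inr h))
        · exact iff_of_false (by decide) (fun h => hA y z ⟨hyz, h⟩)
        · exact iff_of_false (by decide) (irrefl' hA z)
      obtain ⟨u, v, huv⟩ := hno2 f hinj3 hedges
      apply huv
      have e01 : G.edist x y = 1 := SimpleGraph.edist_eq_one_iff_adj.mpr hGxy
      have e12 : G.edist y z = 1 := SimpleGraph.edist_eq_one_iff_adj.mpr hGyz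
      have q01 : P3.edist 0 1 = 1 := SimpleGraph.edist_eq_one_iff_adj.mpr p01
      have q12 : P3.edist 1 2 = 1 := SimpleGraph.edist_eq_one_iff_adj.mpr p12
      fin_cases u <;> fin_cases v <;>
        first
          | (rw [SimpleGraph.edist_self, SimpleGraph.edist_self])
          | (exact (show P3.edist (0:Fin 3) (1:Fin 3) = G.edist x y by rw [q01, e01]))
          | (exact (show P3.edist (0:Fin 3) (1:Fin 3) = G.edist y x by
              rw [q01, SimpleGraph.edist_comm, e01]))
          | (exact (show P3.edist (1:Fin 3) (0:Fin 3) = G.edist y x by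
              rw [SimpleGraph.edist_comm, q01, SimpleGraph.edist_comm, e01]))
          | (exact (show P3.edist (1:Fin 3) (2:Fin 3) = G.edist y z by rw [q12, e12]))
          | (exact (show P3.edist (1:Fin 3) (2:Fin 3) = G.edist z y by
              rw [q12, SimpleGraph.edist_comm, e12]))
          | (exact (show P3.edist (2:Fin 3) (1:Fin 3) = G.edist z y by
              rw [SimpleGraph.edist_comm, q12, SimpleGraph.edist_comm, e12]))
          | (exact (show P3.edist (0:Fin 3) (2:Fin 3) = G.edist x z by rw [eP02, eG02]))
          | (exact (show P3.edist (0:Fin 3) (2:Fin 3) = G.edist z x by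
              rw [eP02, SimpleGraph.edist_comm, eG02]))
          | (exact (show P3.edist (2:Fin 3) (0:Fin 3) = G.edist z x by
              rw [SimpleGraph.edist_comm, eP02, SimpleGraph.edist_comm, eG02]))
    -- build the transitive orientation
    obtain ⟨T, hTiff, hTasym, hTtrans, hTsupp⟩ := mainLemma hA hQ (Finset.univ : Finset V)
    refine ⟨T, ⟨fun u v h => hTasym u v h.1 h.2, fun u v => ?_⟩, fun x y z => hTtrans x y z⟩
    rw [hadj u v]
    exact hTiff u (Finset.mem_univ u) v (Finset.mem_univ v)
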